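/- Let Q = N^γ with γ > 0, and let P be a set of primes p ≤ Q with ∑_{p∈P} (log p)/p ≥ c₁·log Q for some c₁ > 0. If S ⊆ {0,...,N}^d occupies fewer than c₂ residue classes mod p (i.e., the image of S in (ℤ/pℤ)^d has size < c₂) for every p ∈ P, then |S| = O_{c₁,c₂,γ}(1); in fact |S| ≤ c₂ for N sufficiently large. -/

import Mathlib

open Finset

/-- Cauchy–Schwarz fiber counting. -/
lemma aux_CS {α β : Type*} [DecidableEq α] [DecidableEq β] (S : Finset α) (g : α → β) :
    ((S.card : ℝ))^2 ≤ ((S.image g).card : ℝ) *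
      ∑ x ∈ S, ((S.filter fun y => g y = g x).card : ℝ) := by
  classical
  have h1 : ∑ x ∈ S, ((S.filter fun y => g y = g x).card : ℝ)
      = ∑ b ∈ S.image g, ((S.filter fun a => g a = b).card : ℝ) *
          ((S.filter fun a => g a = b).card : ℝ) := by
    have := Finset.sum_comp (s := S) (fun b => ((S.filter fun a => g a = b).card : ℝ)) g
    rw [this]
    refine Finset.sum_congr rfl fun b _ => ?_
    rw [nsmul_eq_mul]
  have h2 : (S.card : ℝ) = ∑ b ∈ S.image g, ((S.filter fun a => g a = b).card : ℝ) := by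
    rw [Finset.card_eq_sum_card_image g S]; push_cast; rfl
  rw [h1, h2]
  calc (∑ b ∈ S.image g, ((S.filter fun a => g a = b).card : ℝ))^2
      ≤ ((S.image g).card : ℝ) * ∑ b ∈ S.image g, ((S.filter fun a => g a = b).card : ℝ)^2 :=
        sq_sum_le_card_mul_sum_sq
    _ = _ := by refine congrArg _ (Finset.sum_congr rfl fun b _ => ?_); ring

/-- Splitting off the diagonal. -/
lemma aux_split {α β : Type*} [DecidableEq α] [DecidableEq β] (S : Finset α) (g : α → β) :
    ∑ x ∈ S, ((S.filter fun y => g y = g x).card : ℝ)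
      = (S.card : ℝ) + ∑ x ∈ S, (((S.erase x).filter fun y => g y = g x).card : ℝ) := by
  classical
  have key : ∀ x ∈ S, ((S.filter fun y => g y = g x).card : ℝ)
      = 1 + (((S.erase x).filter fun y => g y = g x).card : ℝ) := by
    intro x hx
    have h1 : S.filter (fun y => g y = g x) = insert x ((S.erase x).filter fun y => g y = g x) := by
      conv_lhs => rw [← Finset.insert_erase hx]
      rw [Finset.filter_insert, if_pos rfl]
    rw [h1, Finset.card_insert_of_notMem
      (fun h => (Finset.notMem_erase x S) (Finset.mem_filter.mp h).1)]
    push_cast; ring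
  rw [Finset.sum_congr rfl key, Finset.sum_add_distrib, Finset.sum_const, nsmul_eq_mul, mul_one]

/-- The abstract larger-sieve inequality. -/
lemma aux_upper {α : Type*} [DecidableEq α] {β : ℕ → Type*} [∀ p, DecidableEq (β p)]
    (S : Finset α) (P : Finset ℕ) (g : ∀ p, α → β p) (K : ℕ) (lN : ℝ)
    (hlN : 0 ≤ lN)
    (hlogp : ∀ p ∈ P, 0 ≤ Real.log p)
    (himgK : ∀ p ∈ P, (S.image (g p)).card ≤ K)
    (hpair : ∀ x ∈ S, ∀ y ∈ S, y ≠ x → ∀ P' : Finset ℕ, P' ⊆ P →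
      (∀ p ∈ P', g p y = g p x) → ∑ p ∈ P', Real.log p ≤ lN) :
    (∑ p ∈ P, Real.log p) * (S.card : ℝ)^2
      ≤ (K : ℝ) * ((∑ p ∈ P, Real.log p) * (S.card : ℝ) + (S.card : ℝ)^2 * lN) := by
  classical
  have step1 : ∀ p ∈ P, ((S.card : ℝ))^2 ≤ (K:ℝ) * ((S.card : ℝ) +
      ∑ x ∈ S, (((S.erase x).filter fun y => g p y = g p x).card : ℝ)) := by
    intro p hp
    have h1 := aux_CS S (g p)
    have h2 := aux_split S (g p)
    have h4 : ((S.image (g p)).card : ℝ) ≤ (K:ℝ) := by exact_mod_cast himgK p hp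
    have h3 : (0:ℝ) ≤ ∑ x ∈ S, ((S.filter fun y => g p y = g p x).card : ℝ) :=
      Finset.sum_nonneg fun x _ => by positivity
    calc ((S.card : ℝ))^2
        ≤ ((S.image (g p)).card : ℝ) * ∑ x ∈ S, ((S.filter fun y => g p y = g p x).card : ℝ) := h1
      _ ≤ (K:ℝ) * ∑ x ∈ S, ((S.filter fun y => g p y = g p x).card : ℝ) :=
          mul_le_mul_of_nonneg_right h4 h3
      _ = (K:ℝ) * ((S.card : ℝ) +
          ∑ x ∈ S, (((S.erase x).filter fun y => g p y = g p x).card : ℝ)) := by rw [h2]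
  have step3 : ∑ p ∈ P, Real.log p *
      (∑ x ∈ S, (((S.erase x).filter fun y => g p y = g p x).card : ℝ))
      ≤ (S.card : ℝ)^2 * lN := by
    have hswap : ∑ p ∈ P, Real.log p *
        (∑ x ∈ S, (((S.erase x).filter fun y => g p y = g p x).card : ℝ))
        = ∑ x ∈ S, ∑ p ∈ P, Real.log p *
            (((S.erase x).filter fun y => g p y = g p x).card : ℝ) := by
      simp_rw [Finset.mul_sum]
      exact Finset.sum_comm
    rw [hswap]
    have hx_bound : ∀ x ∈ S, ∑ p ∈ P, Real.log p *
        (((S.erase x).filter fun y => g p y = g p x).card : ℝ) ≤ (S.card : ℝ) * lN := by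
      intro x hx
      have hcard : ∀ p : ℕ, (((S.erase x).filter fun y => g p y = g p x).card : ℝ)
          = ∑ y ∈ S.erase x, (if g p y = g p x then (1:ℝ) else 0) := by
        intro p
        rw [Finset.card_filter]
        push_cast
        rfl
      calc ∑ p ∈ P, Real.log p * (((S.erase x).filter fun y => g p y = g p x).card : ℝ)
          = ∑ p ∈ P, ∑ y ∈ S.erase x, (if g p y = g p x then Real.log p else 0) := by
            refine Finset.sum_congr rfl fun p _ => ?_
            rw [hcard p, Finset.mul_sum]
            refine Finset.sum_congr rfl fun y _ => ?_
            split <;> simp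
        _ = ∑ y ∈ S.erase x, ∑ p ∈ P, (if g p y = g p x then Real.log p else 0) :=
            Finset.sum_comm
        _ ≤ ∑ y ∈ S.erase x, lN := by
            refine Finset.sum_le_sum fun y hy => ?_
            rw [← Finset.sum_filter]
            exact hpair x hx y (Finset.mem_of_mem_erase hy) (Finset.ne_of_mem_erase hy)
              _ (Finset.filter_subset _ _) (fun p hp => (Finset.mem_filter.mp hp).2)
        _ = ((S.erase x).card : ℝ) * lN := by rw [Finset.sum_const, nsmul_eq_mul]
        _ ≤ (S.card : ℝ) * lN := by
            refine mul_le_mul_of_nonneg_right ?_ hlN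
            exact_mod_cast Finset.card_le_card (Finset.erase_subset x S)
    calc ∑ x ∈ S, ∑ p ∈ P, Real.log p *
          (((S.erase x).filter fun y => g p y = g p x).card : ℝ)
        ≤ ∑ _x ∈ S, (S.card : ℝ) * lN := Finset.sum_le_sum hx_bound
      _ = (S.card : ℝ) * ((S.card : ℝ) * lN) := by rw [Finset.sum_const, nsmul_eq_mul]
      _ = (S.card : ℝ)^2 * lN := by ring
  calc (∑ p ∈ P, Real.log p) * (S.card : ℝ)^2
      = ∑ p ∈ P, Real.log p * (S.card : ℝ)^2 := by rw [← Finset.sum_mul]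
    _ ≤ ∑ p ∈ P, Real.log p * ((K:ℝ) * ((S.card : ℝ) +
        ∑ x ∈ S, (((S.erase x).filter fun y => g p y = g p x).card : ℝ))) :=
        Finset.sum_le_sum fun p hp => mul_le_mul_of_nonneg_left (step1 p hp) (hlogp p hp)
    _ = ∑ p ∈ P, ((K:ℝ) * (Real.log p * (S.card : ℝ)) + (K:ℝ) * (Real.log p *
        (∑ x ∈ S, (((S.erase x).filter fun y => g p y = g p x).card : ℝ)))) :=
        Finset.sum_congr rfl fun p _ => by ring
    _ = (K:ℝ) * ((∑ p ∈ P, Real.log p * (S.card : ℝ)) + ∑ p ∈ P, Real.log p *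
        (∑ x ∈ S, (((S.erase x).filter fun y => g p y = g p x).card : ℝ))) := by
        rw [Finset.sum_add_distrib, ← Finset.mul_sum, ← Finset.mul_sum, mul_add]
    _ ≤ (K:ℝ) * ((∑ p ∈ P, Real.log p * (S.card : ℝ)) + (S.card : ℝ)^2 * lN) := by
        refine mul_le_mul_of_nonneg_left ?_ (by positivity)
        linarith [step3]
    _ = (K:ℝ) * ((∑ p ∈ P, Real.log p) * (S.card : ℝ) + (S.card : ℝ)^2 * lN) := by
        rw [← Finset.sum_mul]

/-- Primes dividing a small nonzero integer have bounded log-sum. -/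
lemma aux_radical (N : ℕ) (P' : Finset ℕ) (z : ℤ) (hz : z ≠ 0) (hzN : |z| ≤ (N : ℤ))
    (h : ∀ p ∈ P', p.Prime ∧ (p : ℤ) ∣ z) :
    ∑ p ∈ P', Real.log p ≤ Real.log N := by
  classical
  have hdvd : (∏ p ∈ P', p) ∣ z.natAbs := by
    apply Finset.prod_primes_dvd
    · intro p hp; exact (h p hp).1.prime
    · intro p hp
      have h2 : ((p : ℤ)).natAbs ∣ z.natAbs := Int.natAbs_dvd_natAbs.mpr (h p hp).2
      simpa using h2
  have hzpos : 0 < z.natAbs := Int.natAbs_pos.mpr hz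
  have hzle : z.natAbs ≤ N := by
    rw [Int.abs_eq_natAbs] at hzN; exact_mod_cast hzN
  have hprodle : (∏ p ∈ P', p) ≤ N := le_trans (Nat.le_of_dvd hzpos hdvd) hzle
  have hne : ∀ p ∈ P', ((p : ℝ)) ≠ 0 := by
    intro p hp; exact_mod_cast (h p hp).1.pos.ne'
  calc ∑ p ∈ P', Real.log p = Real.log (∏ p ∈ P', (p : ℝ)) := (Real.log_prod hne).symm
    _ = Real.log ((∏ p ∈ P', p : ℕ) : ℝ) := by rw [Nat.cast_prod]
    _ ≤ Real.log N := by
        apply Real.log_le_log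
        · exact_mod_cast Finset.prod_pos fun p hp => (h p hp).1.pos
        · exact_mod_cast hprodle

/-- Primes where two distinct bounded vectors agree mod p have bounded log-sum. -/
lemma aux_pair (d N : ℕ) (x y : Fin d → ℤ) (hxy : x ≠ y)
    (hx : ∀ i, 0 ≤ x i ∧ x i ≤ (N : ℤ)) (hy : ∀ i, 0 ≤ y i ∧ y i ≤ (N : ℤ))
    (P' : Finset ℕ)
    (h : ∀ p ∈ P', p.Prime ∧ ((fun i => ((y i : ZMod p))) = fun i => ((x i : ZMod p)))) :
    ∑ p ∈ P', Real.log p ≤ Real.log N := by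
  obtain ⟨i, hi⟩ := Function.ne_iff.mp hxy
  have hzne : x i - y i ≠ 0 := sub_ne_zero.mpr hi
  have habs : |x i - y i| ≤ (N : ℤ) := by
    have h1 := hx i; have h2 := hy i
    rw [abs_le]; omega
  refine aux_radical N P' (x i - y i) hzne habs fun p hp => ⟨(h p hp).1, ?_⟩
  have heq : ((y i : ZMod p)) = ((x i : ZMod p)) := congrFun (h p hp).2 i
  exact Int.ModEq.dvd ((ZMod.intCast_eq_intCast_iff _ _ _).mp heq)

set_option maxHeartbeats 1000000 in
theorem few_classes_implies_bounded
    (d : ℕ) (γ c₁ c₂ : ℝ) (hγ : 0 < γ) (hc₁ : 0 < c₁) (hc₂ : 0 < c₂) :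
    ∃ N₀ : ℕ, ∀ N : ℕ, N₀ ≤ N →
      ∀ S : Finset (Fin d → ℤ), (∀ x ∈ S, ∀ i, 0 ≤ x i ∧ x i ≤ (N : ℤ)) →
        ∀ P : Finset ℕ,
          (∀ p ∈ P, p.Prime ∧ (p : ℝ) ≤ (N : ℝ) ^ γ) →
          c₁ * Real.log ((N : ℝ) ^ γ) ≤ ∑ p ∈ P, Real.log p / p →
          (∀ p ∈ P, ((S.image (fun s i => ((s i : ZMod p)))).card : ℝ) < c₂) →
          (S.card : ℝ) ≤ c₂ := by
  classical
  obtain ⟨K, hKdef⟩ : ∃ k : ℕ, k = ⌈c₂⌉₊ - 1 := ⟨_, rfl⟩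
  obtain ⟨T, hTdef⟩ : ∃ t : ℕ, t = ⌈(2*(K:ℝ)*((K:ℝ)+1) + 3)/(c₁*γ)⌉₊ + 3 := ⟨_, rfl⟩
  obtain ⟨C, hCdef⟩ : ∃ c : ℝ, c = ((T:ℝ)+1) * Real.log T := ⟨_, rfl⟩
  have hc₁γ : 0 < c₁ * γ := mul_pos hc₁ hγ
  refine ⟨max 2 (⌈Real.exp ((2*C+2)/(c₁*γ))⌉₊ + 1), ?_⟩
  intro N hN S hS P hPp hPsum himg
  by_contra hcon
  push_neg at hcon
  -- basic numeric facts
  have hN2 : 2 ≤ N := le_trans (le_max_left _ _) hN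
  have hNR : (2:ℝ) ≤ (N:ℝ) := by exact_mod_cast hN2
  have hNpos : (0:ℝ) < (N:ℝ) := by linarith
  have hlogN : 0 < Real.log N := Real.log_pos (by linarith)
  have hlogN' : (2*C+2)/(c₁*γ) ≤ Real.log N := by
    have h1 : (⌈Real.exp ((2*C+2)/(c₁*γ))⌉₊ + 1 : ℕ) ≤ N := le_trans (le_max_right _ _) hN
    have h2 : ((⌈Real.exp ((2*C+2)/(c₁*γ))⌉₊ : ℕ) : ℝ) ≤ (N:ℝ) := by
      exact_mod_cast Nat.le_of_succ_le h1
    exact (Real.le_log_iff_exp_le hNpos).mpr (le_trans (Nat.le_ceil _) h2)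
  have hA : c₁ * γ * Real.log N ≤ ∑ p ∈ P, Real.log p / p := by
    rw [Real.log_rpow hNpos] at hPsum; linarith [hPsum]
  have hApos : 0 < c₁ * γ * Real.log N := mul_pos hc₁γ hlogN
  have hlogp : ∀ p ∈ P, 0 ≤ Real.log p := fun p hp =>
    Real.log_nonneg (by exact_mod_cast (hPp p hp).1.one_lt.le)
  have hPne : P.Nonempty := by
    rcases P.eq_empty_or_nonempty with h | h
    · exfalso; rw [h] at hA; simp at hA; linarith
    · exact h
  have hSpos : 0 < S.card := by
    rcases Nat.eq_zero_or_pos S.card with h | h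
    · exfalso; rw [h] at hcon; simp at hcon; linarith
    · exact h
  have hceil1 : 1 ≤ ⌈c₂⌉₊ := Nat.one_le_ceil_iff.mpr hc₂
  have hKc : (K:ℝ) < c₂ := by
    have h1 : (⌈c₂⌉₊ : ℝ) < c₂ + 1 := Nat.ceil_lt_add_one hc₂.le
    have h2 : (K:ℝ) = (⌈c₂⌉₊:ℝ) - 1 := by
      rw [hKdef, Nat.cast_sub hceil1]; norm_num
    linarith
  have himgK : ∀ p ∈ P, (S.image (fun s i => ((s i : ZMod p)))).card ≤ K := by
    intro p hp
    have h2 : (S.image (fun s i => ((s i : ZMod p)))).card < ⌈c₂⌉₊ := Nat.lt_ceil.mpr (himg p hp)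
    rw [hKdef]
    exact Nat.le_sub_one_of_lt h2
  have hK1 : 1 ≤ K := by
    obtain ⟨p, hp⟩ := hPne
    have h1 : 0 < (S.image (fun s i => ((s i : ZMod p)))).card :=
      Finset.card_pos.mpr ((Finset.card_pos.mp hSpos).image _)
    exact le_trans h1 (himgK p hp)
  have hSK : K + 1 ≤ S.card := by
    have h1 : (K:ℝ) < (S.card:ℝ) := lt_trans hKc hcon
    have h2 : K < S.card := by exact_mod_cast h1
    omega
  have hLnn : 0 ≤ ∑ p ∈ P, Real.log p := Finset.sum_nonneg hlogp
  have hsR : (K:ℝ) + 1 ≤ (S.card:ℝ) := by exact_mod_cast hSK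
  have hsRpos : (0:ℝ) < (S.card:ℝ) := by exact_mod_cast hSpos
  have hKR : (1:ℝ) ≤ (K:ℝ) := by exact_mod_cast hK1
  -- UPPER BOUND via the abstract sieve lemma
  have hpair' : ∀ x ∈ S, ∀ y ∈ S, y ≠ x → ∀ P' : Finset ℕ, P' ⊆ P →
      (∀ p ∈ P', (fun s i => ((s i : ZMod p))) y = (fun s i => ((s i : ZMod p))) x) →
      ∑ p ∈ P', Real.log p ≤ Real.log N := by
    intro x hx y hy hne P' hsub hagree
    exact aux_pair d N x y (Ne.symm hne) (hS x hx) (hS y hy) P'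
      (fun p hp => ⟨(hPp p (hsub hp)).1, hagree p hp⟩)
  have hmain : (∑ p ∈ P, Real.log p) * (S.card : ℝ)^2
      ≤ (K:ℝ) * ((∑ p ∈ P, Real.log p) * (S.card : ℝ) + (S.card : ℝ)^2 * Real.log N) :=
    aux_upper S P (fun p s i => ((s i : ZMod p))) K (Real.log N) hlogN.le hlogp himgK hpair'
  have h1 : (∑ p ∈ P, Real.log p) * (S.card:ℝ) * ((K:ℝ)+1)
      ≤ (∑ p ∈ P, Real.log p) * (S.card:ℝ) * (S.card:ℝ) :=
    mul_le_mul_of_nonneg_left hsR (mul_nonneg hLnn hsRpos.le)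
  have hUB : (∑ p ∈ P, Real.log p) ≤ (K:ℝ) * ((K:ℝ)+1) * Real.log N := by
    have e1 := mul_le_mul_of_nonneg_left hmain
      (by positivity : (0:ℝ) ≤ (K:ℝ)+1)
    have e2 := mul_le_mul_of_nonneg_left h1 (by positivity : (0:ℝ) ≤ (K:ℝ))
    have h2 : (∑ p ∈ P, Real.log p) * (S.card:ℝ)^2
        ≤ ((K:ℝ) * ((K:ℝ)+1) * Real.log N) * (S.card:ℝ)^2 := by nlinarith [e1, e2]
    exact le_of_mul_le_mul_right h2 (pow_pos hsRpos 2)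
  -- LOWER BOUND PART
  have hTpos : (0:ℝ) < (T:ℝ) := by
    have h0 : 0 < T := by omega
    exact_mod_cast h0
  have hT3 : (3:ℝ) ≤ (T:ℝ) := by
    have h0 : 3 ≤ T := by omega
    exact_mod_cast h0
  have hlogT : 0 ≤ Real.log T := Real.log_nonneg (by linarith)
  have hP1le : ∑ p ∈ P.filter (· ≤ T), Real.log p / p ≤ C := by
    rw [hCdef]
    have hTc : ∀ p ∈ P.filter (· ≤ T), Real.log p / p ≤ Real.log T := by
      intro p hp
      obtain ⟨hpP, hpT⟩ := Finset.mem_filter.mp hp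
      have hp1 : (1:ℝ) ≤ (p:ℝ) := by exact_mod_cast (hPp p hpP).1.one_lt.le
      have h1 : Real.log p / p ≤ Real.log p := div_le_self (hlogp p hpP) hp1
      have h2 : Real.log p ≤ Real.log T :=
        Real.log_le_log (by linarith) (by exact_mod_cast hpT)
      linarith
    have hcard : ((P.filter (· ≤ T)).card : ℝ) ≤ (T:ℝ) + 1 := by
      have hsub : P.filter (· ≤ T) ⊆ Finset.range (T+1) := fun p hp =>
        Finset.mem_range.mpr (Nat.lt_succ_of_le (Finset.mem_filter.mp hp).2)
      have h0 := Finset.card_le_card hsub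
      rw [Finset.card_range] at h0
      exact_mod_cast h0
    calc ∑ p ∈ P.filter (· ≤ T), Real.log p / p
        ≤ ∑ _p ∈ P.filter (· ≤ T), Real.log T := Finset.sum_le_sum hTc
      _ = ((P.filter (· ≤ T)).card : ℝ) * Real.log T := by rw [Finset.sum_const, nsmul_eq_mul]
      _ ≤ ((T:ℝ)+1) * Real.log T := mul_le_mul_of_nonneg_right hcard hlogT
  have hsplit : ∑ p ∈ P.filter (· ≤ T), Real.log p / p
      + ∑ p ∈ P.filter (fun p => ¬ p ≤ T), Real.log p / p = ∑ p ∈ P, Real.log p / p :=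
    Finset.sum_filter_add_sum_filter_not P _ _
  have hP2ge : c₁ * γ * Real.log N - C ≤ ∑ p ∈ P.filter (fun p => ¬ p ≤ T), Real.log p / p := by
    linarith [hA, hP1le, hsplit]
  have hTA : ∀ p ∈ P.filter (fun p => ¬ p ≤ T), (T:ℝ) * (Real.log p / p) ≤ Real.log p := by
    intro p hp
    obtain ⟨hpP, hpT⟩ := Finset.mem_filter.mp hp
    have hppos : (0:ℝ) < (p:ℝ) := by exact_mod_cast (hPp p hpP).1.pos
    have hTp : (T:ℝ) ≤ (p:ℝ) := by
      have h0 : T ≤ p := le_of_lt (lt_of_not_ge hpT)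
      exact_mod_cast h0
    have h1 : (T:ℝ) * (Real.log p / p) ≤ (p:ℝ) * (Real.log p / p) :=
      mul_le_mul_of_nonneg_right hTp (div_nonneg (hlogp p hpP) hppos.le)
    have h2 : (p:ℝ) * (Real.log p / p) = Real.log p := by field_simp
    linarith
  have hLlower : (T:ℝ) * (c₁ * γ * Real.log N - C) ≤ ∑ p ∈ P, Real.log p := by
    calc (T:ℝ) * (c₁ * γ * Real.log N - C)
        ≤ (T:ℝ) * ∑ p ∈ P.filter (fun p => ¬ p ≤ T), Real.log p / p :=
          mul_le_mul_of_nonneg_left hP2ge hTpos.le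
      _ = ∑ p ∈ P.filter (fun p => ¬ p ≤ T), (T:ℝ) * (Real.log p / p) := Finset.mul_sum _ _ _
      _ ≤ ∑ p ∈ P.filter (fun p => ¬ p ≤ T), Real.log p := Finset.sum_le_sum hTA
      _ ≤ ∑ p ∈ P, Real.log p := Finset.sum_le_sum_of_subset_of_nonneg
          (Finset.filter_subset _ _) (fun p hp _ => hlogp p hp)
  -- FINAL CONTRADICTION
  have hACbig : 2*C + 2 ≤ c₁ * γ * Real.log N := by
    have hh1 : ((2*C+2)/(c₁*γ)) * (c₁*γ) ≤ Real.log N * (c₁*γ) :=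
      mul_le_mul_of_nonneg_right hlogN' hc₁γ.le
    have hh2 : ((2*C+2)/(c₁*γ)) * (c₁*γ) = 2*C+2 := by field_simp
    nlinarith
  have hAC : c₁ * γ * Real.log N / 2 ≤ c₁ * γ * Real.log N - C := by linarith
  have hTge : (2*(K:ℝ)*((K:ℝ)+1) + 3)/(c₁*γ) ≤ (T:ℝ) := by
    have h0 : ((2*(K:ℝ)*((K:ℝ)+1) + 3)/(c₁*γ))
        ≤ ((⌈(2*(K:ℝ)*((K:ℝ)+1) + 3)/(c₁*γ)⌉₊ : ℕ) : ℝ) := Nat.le_ceil _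
    rw [hTdef]; push_cast; linarith
  have h5 : (K:ℝ)*((K:ℝ)+1)*Real.log N + Real.log N ≤ (T:ℝ) * (c₁ * γ * Real.log N / 2) := by
    have hh1 : ((2*(K:ℝ)*((K:ℝ)+1) + 3)/(c₁*γ)) * (c₁ * γ * Real.log N / 2)
        ≤ (T:ℝ) * (c₁ * γ * Real.log N / 2) :=
      mul_le_mul_of_nonneg_right hTge (by linarith)
    have hh2 : ((2*(K:ℝ)*((K:ℝ)+1) + 3)/(c₁*γ)) * (c₁ * γ * Real.log N / 2)
        = (2*(K:ℝ)*((K:ℝ)+1) + 3) * Real.log N / 2 := by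
      field_simp
    nlinarith [hlogN]
  have h6 : (T:ℝ) * (c₁ * γ * Real.log N / 2) ≤ (T:ℝ) * (c₁ * γ * Real.log N - C) :=
    mul_le_mul_of_nonneg_left hAC hTpos.le
  linarith [hUB, hLlower, h5, h6, hlogN]
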